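/- Let d ≥ 2, n ≥ 2 and let f ∈ T(d,n,*) with M_1(f) ≠ ∅. Let P(f) = Conv(M_1(f)), Vert(P(f)) its vertex set, and D(f) = {x ∈ M_0(f) : Conv(P(f) ∪ {x}) ∩ M_0(f) = {x}}. Then the set of essential points of f with respect to T(d,n,*) equals Vert(P(f)) ∪ D(f), and this set is the unique minimal teaching set of f with respect to T(d,n,*). -/

import Mathlib

open Finset in
/-- The embedding of the integer cube `{0,…,n-1}^d` into `ℝ^d`. -/
def toR {d n : ℕ} (x : Fin d → Fin n) : Fin d → ℝ := fun i => (x i : ℝ)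

open Finset in
/-- `f` is a `k`-threshold function on `{0,…,n-1}^d`: its `1`-set is the solution
set of a system of `k` linear inequalities. -/
def IsKThreshold (d n k : ℕ) (f : (Fin d → Fin n) → Bool) : Prop :=
  ∃ (a : Fin k → ℝ) (b : Fin k → Fin d → ℝ),
    ∀ x, f x = true ↔ ∀ i, ∑ j, b i j * (x j : ℝ) ≤ a i

/-- The class `T(d,n,k)` of `k`-threshold functions. -/
def TClass (d n k : ℕ) : Set ((Fin d → Fin n) → Bool) := {f | IsKThreshold d n k f}

/-- The convex hull of the `1`-set of `f` (that is, `P(f)`). -/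
def hullOne (d n : ℕ) (f : (Fin d → Fin n) → Bool) : Set (Fin d → ℝ) :=
  convexHull ℝ (toR '' {x | f x = true})

/-- `f` belongs to `T(d,n,*)`: its `1`-set equals `Conv(M₁(f)) ∩ E_n^d`. -/
def LatticeConvex {d n : ℕ} (f : (Fin d → Fin n) → Bool) : Prop :=
  ∀ x, f x = true ↔ toR x ∈ hullOne d n f

/-- The class `T(d,n,*)` of all `k`-threshold functions for all `k`. -/
def TStar (d n : ℕ) : Set ((Fin d → Fin n) → Bool) := {f | LatticeConvex f}

/-- `T` is a teaching set of `f` with respect to the class `C`. -/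
def TeachingSet {α : Type*} (C : Set (α → Bool)) (f : α → Bool) (T : Set α) : Prop :=
  ∀ g ∈ C, (∀ x ∈ T, g x = f x) → g = f

/-- `x` is an essential point of `f` with respect to the class `D`. -/
def Essential {α : Type*} (D : Set (α → Bool)) (f : α → Bool) (x : α) : Prop :=
  ∃ g ∈ D, g x ≠ f x ∧ ∀ y, y ≠ x → g y = f y

/-- The set of vertices of `P(f)` (as lattice points). -/
def VertSet (d n : ℕ) (f : (Fin d → Fin n) → Bool) : Set (Fin d → Fin n) :=
  {x | toR x ∈ Set.extremePoints ℝ (hullOne d n f)}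

/-- The set `D(f) = {x ∈ M₀(f) : Conv(P(f) ∪ {x}) ∩ M₀(f) = {x}}`. -/
def DSet (d n : ℕ) (f : (Fin d → Fin n) → Bool) : Set (Fin d → Fin n) :=
  {x | f x = false ∧
    ∀ y, toR y ∈ convexHull ℝ (toR '' {z | f z = true} ∪ {toR x}) → f y = false → y = x}

/-- For `f ∈ T(d,n,*)` with nonempty `1`-set, the set of essential points equals
`Vert(P(f)) ∪ D(f)`, and this set is the unique minimal teaching set: it is a
teaching set and is contained in every teaching set of `f`. -/
lemma toR_inj {d n : ℕ} : Function.Injective (toR (d:=d) (n:=n)) := by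
  intro x y h
  funext i
  have := congrFun h i
  simp only [toR] at this
  exact Fin.ext (by exact_mod_cast this)

lemma hull_eq_vert {d n : ℕ} (f : (Fin d → Fin n) → Bool) :
    hullOne d n f = convexHull ℝ (Set.extremePoints ℝ (hullOne d n f)) := by
  have hfin : (toR '' {x | f x = true}).Finite := (Set.toFinite _).image _
  have hcomp : IsCompact (hullOne d n f) := hfin.isCompact_convexHull (𝕜 := ℝ)
  have hE : (Set.extremePoints ℝ (hullOne d n f)).Finite :=
    hfin.subset extremePoints_convexHull_subset
  have h := closure_convexHull_extremePoints hcomp (convex_convexHull ℝ _)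
  rw [(hE.isClosed_convexHull (𝕜 := ℝ)).closure_eq] at h
  exact h.symm

lemma extreme_notin {d : ℕ} {S : Set (Fin d → ℝ)} {v : Fin d → ℝ}
    (hv : v ∈ Set.extremePoints ℝ (convexHull ℝ S)) :
    v ∉ convexHull ℝ (S \ {v}) := by
  have hext : IsExtreme ℝ (convexHull ℝ S) {v} := isExtreme_singleton.2 hv
  have hconv : Convex ℝ (convexHull ℝ S \ {v}) :=
    IsExtreme.convex_diff (convex_convexHull ℝ S) hext
  have hsub : convexHull ℝ (S \ {v}) ⊆ convexHull ℝ S \ {v} :=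
    convexHull_min (Set.diff_subset_diff_left (subset_convexHull ℝ S)) hconv
  intro h
  exact (hsub h).2 rfl

lemma antisym {d n : ℕ} {f : (Fin d → Fin n) → Bool} (hf : LatticeConvex f)
    (hne : ∃ x, f x = true) {x y : Fin d → Fin n} (hx : f x = false)
    (hxy : toR y ∈ convexHull ℝ (insert (toR x) (toR '' {z | f z = true})))
    (hyx : toR x ∈ convexHull ℝ (insert (toR y) (toR '' {z | f z = true}))) :
    x = y := by
  set S := toR '' {z | f z = true} with hS
  have hSne : S.Nonempty := by
    obtain ⟨w, hw⟩ := hne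
    exact ⟨toR w, ⟨w, hw, rfl⟩⟩
  rw [convexHull_insert hSne, mem_convexJoin] at hxy hyx
  obtain ⟨a', ha', p, hp, hseg1⟩ := hxy
  obtain ⟨c', hc', q, hq, hseg2⟩ := hyx
  rw [Set.mem_singleton_iff] at ha' hc'
  subst ha' hc'
  obtain ⟨a, b, ha, hb, hab, he1⟩ := hseg1
  obtain ⟨c, e, hc, he, hce, he2⟩ := hseg2
  -- he1 : a • toR x + b • p = toR y ; he2 : c • toR y + e • q = toR x
  by_cases hca : c * a = 1
  · -- then a = 1 and c = 1, so b = 0, toR y = toR x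
    have ha1 : a = 1 := by nlinarith
    have hb0 : b = 0 := by linarith
    subst ha1; subst hb0
    apply toR_inj
    rw [← he1]; simp
  · -- toR x is a proper convex combination of p and q, contradiction
    have hca' : c * a < 1 := lt_of_le_of_ne (by nlinarith) hca
    have ht : (0:ℝ) < 1 - c * a := by linarith
    have key : toR x ∈ convexHull ℝ S := by
      have hcomb : ((1 - c*a)⁻¹ * (c * b)) • p + ((1 - c*a)⁻¹ * e) • q ∈ convexHull ℝ S := by
        refine (convex_convexHull ℝ S) hp hq ?_ ?_ ?_
        · positivity
        · positivity
        · field_simp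
          ring_nf
          nlinarith [hab, hce]
      have heq : toR x = ((1 - c*a)⁻¹ * (c * b)) • p + ((1 - c*a)⁻¹ * e) • q := by
        have h3 : (1 - c*a) • toR x = (c * b) • p + e • q := by
          have h4 : toR x = (c*a) • toR x + ((c * b) • p + e • q) := by
            calc toR x = c • toR y + e • q := he2.symm
              _ = c • (a • toR x + b • p) + e • q := by rw [he1]
              _ = (c*a) • toR x + ((c * b) • p + e • q) := by module
          rw [sub_smul, one_smul]
          exact sub_eq_of_eq_add' h4
        have := congrArg (fun v => (1 - c*a)⁻¹ • v) h3
        simp only [smul_smul, inv_mul_cancel₀ (ne_of_gt ht), one_smul, smul_add] at this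
        rw [this]
      rw [heq]; exact hcomb
    have := (hf x).2 key
    rw [hx] at this
    exact absurd this (by simp)

lemma teaching {d n : ℕ} {f : (Fin d → Fin n) → Bool} (hf : LatticeConvex f)
    (hne : ∃ x, f x = true) :
    TeachingSet (TStar d n) f (VertSet d n f ∪ DSet d n f) := by
  classical
  intro g hg hagree
  have hg' : LatticeConvex g := hg
  set S := toR '' {z | f z = true} with hSdef
  -- Step 1: every extreme point of P(f) is a 1-point of g
  have hEsub : Set.extremePoints ℝ (hullOne d n f) ⊆ toR '' {z | g z = true} := by
    intro e he
    obtain ⟨v, hv, rfl⟩ := extremePoints_convexHull_subset he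
    have hvV : v ∈ VertSet d n f := he
    have := hagree v (Or.inl hvV)
    refine ⟨v, ?_, rfl⟩
    have hv' : f v = true := hv
    show g v = true
    rw [this, hv']
  -- Step 2: f x = true → g x = true
  have hfg : ∀ x, f x = true → g x = true := by
    intro x hx
    apply (hg' x).2
    have h1 : toR x ∈ convexHull ℝ (Set.extremePoints ℝ (hullOne d n f)) := by
      rw [← hull_eq_vert]; exact (hf x).1 hx
    exact convexHull_mono hEsub h1
  -- hull of insert lands in hull of g's 1-set
  have hIns : ∀ x, g x = true → convexHull ℝ (insert (toR x) S) ⊆ hullOne d n g := by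
    intro x hx
    apply convexHull_min _ (convex_convexHull ℝ _)
    rintro p (rfl | ⟨z, hz, rfl⟩)
    · exact (hg' x).1 hx
    · exact subset_convexHull ℝ _ ⟨z, hfg z hz, rfl⟩
  -- Step 3: g x = true → f x = true
  have hgf : ∀ x, g x = true → f x = true := by
    by_contra hB
    push_neg at hB
    set Z : (Fin d → Fin n) → Finset (Fin d → Fin n) := fun x => Finset.univ.filter
      (fun y => f y = false ∧ toR y ∈ convexHull ℝ (insert (toR x) S)) with hZdef
    set B : Finset (Fin d → Fin n) :=
      Finset.univ.filter (fun x => g x = true ∧ f x = false) with hBdef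
    have hBne : B.Nonempty := by
      obtain ⟨x, hgx, hfx⟩ := hB
      refine ⟨x, ?_⟩
      simp only [hBdef, Finset.mem_filter, Finset.mem_univ, true_and]
      exact ⟨hgx, Bool.not_eq_true (f x) ▸ hfx⟩
    obtain ⟨x₀, hx₀B, hmin⟩ := B.exists_min_image (fun x => (Z x).card) hBne
    simp only [hBdef, Finset.mem_filter, Finset.mem_univ, true_and] at hx₀B
    obtain ⟨hgx₀, hfx₀⟩ := hx₀B
    -- x₀ is not in DSet (else g x₀ = f x₀, contradiction)
    have hnotD : x₀ ∉ DSet d n f := by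
      intro hD
      have := hagree x₀ (Or.inr hD)
      rw [hgx₀, hfx₀] at this
      exact absurd this (by simp)
    -- so there is another 0-point y in the hull
    have hexy : ∃ y, toR y ∈ convexHull ℝ (insert (toR x₀) S) ∧ f y = false ∧ y ≠ x₀ := by
      by_contra hno
      push_neg at hno
      refine hnotD ⟨hfx₀, fun y hy hfy => ?_⟩
      rw [Set.union_singleton] at hy
      exact hno y hy hfy
    obtain ⟨y, hyhull, hfy, hyne⟩ := hexy
    have hgy : g y = true := (hg' y).2 (hIns x₀ hgx₀ hyhull)
    have hyB : y ∈ B := by simp [hBdef, hgy, hfy]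
    -- Z y ⊊ Z x₀
    have hsub : Z y ⊆ Z x₀ := by
      intro z hz
      simp only [hZdef, Finset.mem_filter, Finset.mem_univ, true_and] at hz ⊢
      refine ⟨hz.1, ?_⟩
      have : convexHull ℝ (insert (toR y) S) ⊆ convexHull ℝ (insert (toR x₀) S) := by
        apply convexHull_min _ (convex_convexHull ℝ _)
        rintro p (rfl | hp)
        · exact hyhull
        · exact subset_convexHull ℝ _ (Set.mem_insert_of_mem _ hp)
      exact this hz.2
    have hx₀Z : x₀ ∈ Z x₀ := by
      simp only [hZdef, Finset.mem_filter, Finset.mem_univ, true_and]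
      exact ⟨hfx₀, subset_convexHull ℝ _ (Set.mem_insert _ _)⟩
    have hx₀notZy : x₀ ∉ Z y := by
      intro h
      simp only [hZdef, Finset.mem_filter, Finset.mem_univ, true_and] at h
      exact hyne (antisym hf hne hfy h.2 hyhull)
    have hlt : (Z y).card < (Z x₀).card :=
      Finset.card_lt_card ⟨hsub, fun h => hx₀notZy (h hx₀Z)⟩
    exact absurd (hmin y hyB) (not_le.2 hlt)
  funext x
  cases hfx : f x with
  | true => rw [hfg x hfx]
  | false =>
    cases hgx : g x with
    | true => rw [hgf x hgx] at hfx; exact absurd hfx (by simp)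
    | false => rfl

lemma vert_ess {d n : ℕ} {f : (Fin d → Fin n) → Bool} (hf : LatticeConvex f)
    {v : Fin d → Fin n} (hv : v ∈ VertSet d n f) : Essential (TStar d n) f v := by
  classical
  have hfv : f v = true := (hf v).2 hv.1
  refine ⟨Function.update f v false, ?_, by simp [hfv], fun y hy => Function.update_of_ne hy _ _⟩
  intro x
  have hset : {z | Function.update f v false z = true} = {z | f z = true} \ {v} := by
    ext z
    by_cases hz : z = v <;> simp [hz, Function.update_of_ne, hfv]
  have himg : toR '' {z | Function.update f v false z = true}
      = (toR '' {z | f z = true}) \ {toR v} := by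
    rw [hset, Set.image_diff toR_inj, Set.image_singleton]
  show Function.update f v false x = true ↔
    toR x ∈ convexHull ℝ (toR '' {z | Function.update f v false z = true})
  rw [himg]
  constructor
  · intro hx
    have hxv : x ≠ v := by
      rintro rfl
      simp at hx
    rw [Function.update_of_ne hxv] at hx
    exact subset_convexHull ℝ _ ⟨⟨x, hx, rfl⟩, fun h => hxv (toR_inj h)⟩
  · intro hx
    have hfx : f x = true := (hf x).2 (convexHull_mono Set.diff_subset hx)
    have hxv : x ≠ v := by
      rintro rfl
      exact extreme_notin hv hx
    rw [Function.update_of_ne hxv]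
    exact hfx

lemma d_ess {d n : ℕ} {f : (Fin d → Fin n) → Bool} (hf : LatticeConvex f)
    {x₀ : Fin d → Fin n} (hx : x₀ ∈ DSet d n f) : Essential (TStar d n) f x₀ := by
  classical
  obtain ⟨hfx₀, hD⟩ := hx
  refine ⟨Function.update f x₀ true, ?_, by simp [hfx₀], fun y hy => Function.update_of_ne hy _ _⟩
  intro x
  have hset : {z | Function.update f x₀ true z = true} = insert x₀ {z | f z = true} := by
    ext z
    by_cases hz : z = x₀ <;> simp [hz, Function.update_of_ne]
  have himg : toR '' {z | Function.update f x₀ true z = true}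
      = insert (toR x₀) (toR '' {z | f z = true}) := by
    rw [hset, Set.image_insert_eq]
  show Function.update f x₀ true x = true ↔
    toR x ∈ convexHull ℝ (toR '' {z | Function.update f x₀ true z = true})
  rw [himg]
  constructor
  · intro hx
    by_cases hxv : x = x₀
    · exact subset_convexHull ℝ _ (hxv ▸ Set.mem_insert _ _)
    · rw [Function.update_of_ne hxv] at hx
      exact subset_convexHull ℝ _ (Set.mem_insert_of_mem _ ⟨x, hx, rfl⟩)
  · intro hx
    by_cases hxv : x = x₀
    · rw [hxv]; simp
    · rw [Function.update_of_ne hxv]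
      cases hfx : f x with
      | true => rfl
      | false =>
        exact absurd (hD x (by rwa [Set.union_singleton]) hfx) hxv

theorem stmt8 (d n : ℕ) (hd : 2 ≤ d) (hn : 2 ≤ n) (f : (Fin d → Fin n) → Bool)
    (hf : f ∈ TStar d n) (hne : ∃ x, f x = true) :
    {x | Essential (TStar d n) f x} = VertSet d n f ∪ DSet d n f ∧
    TeachingSet (TStar d n) f (VertSet d n f ∪ DSet d n f) ∧
    (∀ T : Set (Fin d → Fin n), TeachingSet (TStar d n) f T →
      VertSet d n f ∪ DSet d n f ⊆ T) := by
  have hlc : LatticeConvex f := hf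
  have hteach := teaching hlc hne
  have hess : ∀ x ∈ VertSet d n f ∪ DSet d n f, Essential (TStar d n) f x := by
    intro x hx
    cases hx with
    | inl h => exact vert_ess hlc h
    | inr h => exact d_ess hlc h
  refine ⟨?_, hteach, ?_⟩
  · ext x
    simp only [Set.mem_setOf_eq]
    constructor
    · rintro ⟨g, hg, hgx, hgy⟩
      by_contra hx
      have heq : g = f := hteach g hg (fun y hy => hgy y (fun h => hx (h ▸ hy)))
      exact hgx (congrFun heq x)
    · exact hess x
  · intro T hT x hx
    obtain ⟨g, hg, hgx, hgy⟩ := hess x hx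
    by_contra hxT
    exact hgx (congrFun (hT g hg (fun y hy => hgy y (fun h => hxT (h ▸ hy)))) x)
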